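/- arXiv:1707.00689 — 5 statements merged into one kernel-verified Lean document; each statement's English description precedes it below -/
import Mathlib

section
/- Let A be a (possibly noncommutative) unital ring and let x, y ∈ A satisfy yx − xy = 1. Then for every n ≥ 1 one has x^n y^n = (xy)(xy − 1)(xy − 2)⋯(xy − (n−1)), i.e. x^n y^n = ∏_{k=0}^{n−1}(xy − k·1) (the factors xy − k·1 pairwise commute). -/
private lemma key_comm {A : Type*} [Ring A] (x y : A) (h : y * x - x * y = 1)
    (n : ℕ) : (x * y) * y ^ n = y ^ n * (x * y - (n : A)) := by
  induction n with
  | zero => simp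
  | succ n ih =>
    have hxy : (x * y) * y = y * (x * y) - y := by
      have h' : x * y = y * x - 1 := by
        rw [sub_eq_iff_eq_add.mp h]; abel
      calc (x * y) * y = (y * x - 1) * y := by rw [← h']
        _ = y * (x * y) - y := by rw [sub_mul, one_mul, mul_assoc]
    calc (x * y) * y ^ (n + 1) = ((x * y) * y ^ n) * y := by
          rw [pow_succ, ← mul_assoc]
      _ = y ^ n * ((x * y - (n : A)) * y) := by rw [ih, mul_assoc]
      _ = y ^ n * ((x * y) * y - (n : A) * y) := by rw [sub_mul]
      _ = y ^ n * (y * (x * y) - y - (n : A) * y) := by rw [hxy]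
      _ = y ^ n * (y * (x * y - ((n : ℕ) + 1 : A))) := by
            congr 1
            rw [mul_sub, mul_add, mul_one, (Nat.commute_cast y n).eq, sub_sub,
              add_comm y ((n : A) * y), ← sub_sub]
      _ = y ^ (n + 1) * (x * y - ((n : ℕ) + 1 : A)) := by
            rw [pow_succ, mul_assoc]
      _ = y ^ (n + 1) * (x * y - ((n + 1 : ℕ) : A)) := by push_cast; ring_nf

/-- Let `A` be a (possibly noncommutative) unital ring and `x, y ∈ A` with `yx − xy = 1`.
Then for every `n ≥ 1`, `x^n y^n = (xy)(xy − 1)(xy − 2) ⋯ (xy − (n−1))`; the factors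
`xy − k·1` pairwise commute, so the product (taken here in the order `k = 0, 1, …, n−1`)
is unambiguous. -/
theorem xn_yn_eq_prod {A : Type*} [Ring A] (x y : A) (h : y * x - x * y = 1)
    (n : ℕ) (hn : 1 ≤ n) :
    (∀ k l : ℕ, Commute (x * y - (k : A)) (x * y - (l : A))) ∧
    x ^ n * y ^ n = ((List.range n).map fun k : ℕ => x * y - (k : A)).prod := by
  constructor
  · intro k l
    have h1 : Commute (x * y) (x * y - (l : A)) :=
      Commute.sub_right (Commute.refl (x * y)) (Nat.commute_cast (x * y) l)
    have h2 : Commute ((k : A)) (x * y - (l : A)) :=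
      Commute.sub_right (Nat.cast_commute k (x * y)) (Nat.cast_commute k ((l : A)))
    exact Commute.sub_left h1 h2
  · clear hn
    induction n with
    | zero => simp
    | succ n ih =>
      rw [List.range_succ, List.map_append, List.prod_append, ← ih]
      simp only [List.map_cons, List.map_nil, List.prod_cons, List.prod_nil, mul_one]
      calc x ^ (n + 1) * y ^ (n + 1) = x ^ n * ((x * y) * y ^ n) := by
            rw [pow_succ, pow_succ']
            noncomm_ring
        _ = x ^ n * (y ^ n * (x * y - (n : A))) := by rw [key_comm x y h]
        _ = x ^ n * y ^ n * (x * y - (n : A)) := by rw [mul_assoc]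
end

section
/- Let K be a field of characteristic p > 0 and let a, b ∈ K with b ≠ 0. Let A_{[ab,b)} be the K-algebra presented by generators z, u and relations z^p − z = ab, u^p = b, uz = zu + u, and let A_{((a,b))} be the K-algebra presented by generators x, y and relations x^p = a, y^p = b, yx − xy = 1 (each presented algebra being the quotient of the free K-algebra on the listed generators by the two-sided ideal generated by the listed relations). Then the assignment z ↦ xy, u ↦ y extends to a K-algebra isomorphism A_{[ab,b)} → A_{((a,b))}. -/
noncomputable section

open Polynomial

section Aux

variable {K : Type*} [Field K] {A : Type*} [Ring A] [Algebra K A]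

/-- The product `(z - 0)(z - 1) ⋯ (z - (n-1))` in a possibly noncommutative ring. -/
def zProd (z : A) (n : ℕ) : A := ((List.range n).map (fun i : ℕ => z - (i : A))).prod

lemma zProd_succ (z : A) (n : ℕ) : zProd z (n + 1) = zProd z n * (z - (n : A)) := by
  unfold zProd
  rw [List.range_succ, List.map_append, List.prod_append]
  simp

lemma aux_pow_mul (z u : A) (h : u * z = z * u + u) (k : ℕ) :
    u ^ k * z = z * u ^ k + (k : A) * u ^ k := by
  induction k with
  | zero => simp
  | succ n ih =>
    have e : u ^ (n + 1) * z = u ^ n * (z * u + u) := by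
      rw [pow_succ, mul_assoc, h]
    rw [e, mul_add, ← mul_assoc, ih]
    push_cast
    noncomm_ring

lemma aux_key_pow (z u : A) (h : u * z = z * u + u) (p : ℕ) (hp1 : 1 ≤ p)
    (hp0 : (p : A) = 0) (n : ℕ) :
    (z * u ^ (p - 1)) ^ n = zProd z n * u ^ (n * (p - 1)) := by
  have hc : ∀ m : ℕ, ((m * (p - 1) : ℕ) : A) = -(m : A) := by
    intro m
    push_cast [Nat.cast_sub hp1]
    rw [hp0, zero_sub, mul_neg_one]
  induction n with
  | zero => simp [zProd]
  | succ n ih =>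
    rw [pow_succ, ih]
    have h2 : u ^ (n * (p - 1)) * z = (z - (n : A)) * u ^ (n * (p - 1)) := by
      rw [aux_pow_mul z u h, hc]
      noncomm_ring
    calc zProd z n * u ^ (n * (p - 1)) * (z * u ^ (p - 1))
        = zProd z n * (u ^ (n * (p - 1)) * z) * u ^ (p - 1) := by noncomm_ring
      _ = zProd z n * (z - (n : A)) * (u ^ (n * (p - 1)) * u ^ (p - 1)) := by
          rw [h2]; noncomm_ring
      _ = zProd z (n + 1) * u ^ ((n + 1) * (p - 1)) := by
          rw [zProd_succ, ← pow_add, add_mul, one_mul]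

lemma aux_prod_X_sub_C (p : ℕ) [hp : Fact p.Prime] [CharP K p] :
    ∏ i ∈ Finset.range p, (X - C ((i : K))) = X ^ p - X := by
  have hcard : Fintype.card (ZMod p) = p := ZMod.card p
  have h1 : ∏ a : ZMod p, (X - C a) = X ^ p - X := by
    have hmonic : (X ^ p - X : (ZMod p)[X]).Monic := by
      apply Polynomial.monic_X_pow_sub
      rw [degree_X]
      exact_mod_cast hp.out.one_lt
    have hdeg : (X ^ p - X : (ZMod p)[X]).natDegree = p := by
      have := FiniteField.X_pow_card_sub_X_natDegree_eq (ZMod p) hp.out.one_lt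
      simpa using this
    have hroots : (X ^ p - X : (ZMod p)[X]).roots = Finset.univ.val := by
      have := FiniteField.roots_X_pow_card_sub_X (ZMod p)
      rwa [hcard] at this
    have := prod_multiset_X_sub_C_of_monic_of_roots_card_eq hmonic
      (by rw [hroots, hdeg]; simpa using hcard)
    rw [hroots] at this
    rw [← this]
    rfl
  have h2 : ∏ a : ZMod p, (X - C ((ZMod.castHom (dvd_refl p) K) a)) = X ^ p - X := by
    have := congrArg (Polynomial.map (ZMod.castHom (dvd_refl p) K)) h1
    simpa [Polynomial.map_prod] using this
  rw [← h2]
  refine Finset.prod_bij' (fun i _ => ((i : ZMod p))) (fun a _ => a.val) ?_ ?_ ?_ ?_ ?_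
  · intro i hi; exact Finset.mem_univ _
  · intro a _; exact Finset.mem_range.mpr (ZMod.val_lt a)
  · intro i hi; exact ZMod.val_cast_of_lt (Finset.mem_range.mp hi)
  · intro a _; exact ZMod.natCast_rightInverse a
  · intro i hi
    simp [Polynomial.C_eq_natCast]

lemma aux_prod_eq (p : ℕ) [hp : Fact p.Prime] [CharP K p] (z : A) :
    zProd z p = z ^ p - z := by
  have key : ∀ n : ℕ, (Polynomial.aeval z) (∏ i ∈ Finset.range n, (X - C ((i : K)))) =
      zProd z n := by
    intro n
    induction n with
    | zero => simp [zProd]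
    | succ n ih =>
      rw [Finset.prod_range_succ, map_mul, ih, zProd_succ]
      simp
  have := key p
  rw [aux_prod_X_sub_C (K := K) p] at this
  simpa using this.symm

end Aux


variable (K : Type*) [Field K] (p : ℕ) (a b : K)

/-- The relations `z^p − z = ab`, `u^p = b`, `uz = zu + u` defining `A_{[ab,b)_p}`,
with `z` the first and `u` the second generator of the free algebra. -/
inductive RelAS (K : Type*) [Field K] (p : ℕ) (a b : K) :
    FreeAlgebra K (Fin 2) → FreeAlgebra K (Fin 2) → Prop
  | zrel : RelAS K p a b (FreeAlgebra.ι K (0 : Fin 2) ^ p - FreeAlgebra.ι K (0 : Fin 2))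
      (algebraMap K (FreeAlgebra K (Fin 2)) (a * b))
  | urel : RelAS K p a b (FreeAlgebra.ι K (1 : Fin 2) ^ p)
      (algebraMap K (FreeAlgebra K (Fin 2)) b)
  | uzrel : RelAS K p a b (FreeAlgebra.ι K (1 : Fin 2) * FreeAlgebra.ι K (0 : Fin 2))
      (FreeAlgebra.ι K (0 : Fin 2) * FreeAlgebra.ι K (1 : Fin 2) + FreeAlgebra.ι K (1 : Fin 2))

/-- The algebra `A_{[ab,b)_p} = K⟨z, u ∣ z^p − z = ab, u^p = b, uz = zu + u⟩`. -/
abbrev AAS : Type _ := RingQuot (RelAS K p a b)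

/-- The relations `x^p = a`, `y^p = b`, `yx − xy = 1` defining `A_{((a,b))_p}`,
with `x` the first and `y` the second generator of the free algebra. -/
inductive RelW (K : Type*) [Field K] (p : ℕ) (a b : K) :
    FreeAlgebra K (Fin 2) → FreeAlgebra K (Fin 2) → Prop
  | xrel : RelW K p a b (FreeAlgebra.ι K (0 : Fin 2) ^ p)
      (algebraMap K (FreeAlgebra K (Fin 2)) a)
  | yrel : RelW K p a b (FreeAlgebra.ι K (1 : Fin 2) ^ p)
      (algebraMap K (FreeAlgebra K (Fin 2)) b)
  | yxrel : RelW K p a b (FreeAlgebra.ι K (1 : Fin 2) * FreeAlgebra.ι K (0 : Fin 2))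
      (FreeAlgebra.ι K (0 : Fin 2) * FreeAlgebra.ι K (1 : Fin 2) + 1)

/-- The algebra `A_{((a,b))_p} = K⟨x, y ∣ x^p = a, y^p = b, [y,x] = 1⟩`. -/
abbrev AW : Type _ := RingQuot (RelW K p a b)

/-- Let `K` be a field of characteristic `p > 0` and `a, b ∈ K`, `b ≠ 0`. Then the
assignment `z ↦ xy`, `u ↦ y` extends to a `K`-algebra isomorphism
`A_{[ab,b)_p} → A_{((a,b))_p}`. -/
theorem symbolAlgebra_iso [hp : Fact p.Prime] [CharP K p] (hb : b ≠ 0) :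
    ∃ f : AAS K p a b ≃ₐ[K] AW K p a b,
      f (RingQuot.mkAlgHom K (RelAS K p a b) (FreeAlgebra.ι K (0 : Fin 2))) =
        RingQuot.mkAlgHom K (RelW K p a b) (FreeAlgebra.ι K (0 : Fin 2)) *
          RingQuot.mkAlgHom K (RelW K p a b) (FreeAlgebra.ι K (1 : Fin 2)) ∧
      f (RingQuot.mkAlgHom K (RelAS K p a b) (FreeAlgebra.ι K (1 : Fin 2))) =
        RingQuot.mkAlgHom K (RelW K p a b) (FreeAlgebra.ι K (1 : Fin 2)) := by
  classical
  have hp1 : 1 ≤ p := hp.out.one_le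
  set x : AW K p a b := RingQuot.mkAlgHom K (RelW K p a b) (FreeAlgebra.ι K (0 : Fin 2)) with hxd
  set y : AW K p a b := RingQuot.mkAlgHom K (RelW K p a b) (FreeAlgebra.ι K (1 : Fin 2)) with hyd
  set z : AAS K p a b := RingQuot.mkAlgHom K (RelAS K p a b) (FreeAlgebra.ι K (0 : Fin 2)) with hzd
  set u : AAS K p a b := RingQuot.mkAlgHom K (RelAS K p a b) (FreeAlgebra.ι K (1 : Fin 2)) with hud
  -- relations
  have hxp : x ^ p = algebraMap K (AW K p a b) a := by
    rw [hxd, ← map_pow, RingQuot.mkAlgHom_rel K RelW.xrel, AlgHom.commutes]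
  have hyp : y ^ p = algebraMap K (AW K p a b) b := by
    rw [hyd, ← map_pow, RingQuot.mkAlgHom_rel K RelW.yrel, AlgHom.commutes]
  have hyx : y * x = x * y + 1 := by
    rw [hyd, hxd, ← map_mul, RingQuot.mkAlgHom_rel K RelW.yxrel, map_add, map_mul, map_one]
  have hzp : z ^ p - z = algebraMap K (AAS K p a b) (a * b) := by
    rw [hzd, ← map_pow, ← map_sub, RingQuot.mkAlgHom_rel K RelAS.zrel, AlgHom.commutes]
  have hup : u ^ p = algebraMap K (AAS K p a b) b := by
    rw [hud, ← map_pow, RingQuot.mkAlgHom_rel K RelAS.urel, AlgHom.commutes]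
  have huz : u * z = z * u + u := by
    rw [hud, hzd, ← map_mul, RingQuot.mkAlgHom_rel K RelAS.uzrel, map_add, map_mul]
  -- characteristic
  have h0W : ((p : ℕ) : AW K p a b) = 0 := by
    rw [← map_natCast (algebraMap K (AW K p a b)), CharP.cast_eq_zero K p, map_zero]
  have h0AS : ((p : ℕ) : AAS K p a b) = 0 := by
    rw [← map_natCast (algebraMap K (AAS K p a b)), CharP.cast_eq_zero K p, map_zero]
  have hbp : b ^ p = b ^ (p - 1) * b := by
    rw [← pow_succ, Nat.sub_add_cancel hp1]
  -- facts in AW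
  have hyz : y * (x * y) = (x * y) * y + y := by
    rw [← mul_assoc, hyx]; noncomm_ring
  have hxyp : (x * y) * y ^ (p - 1) = algebraMap K (AW K p a b) b * x := by
    rw [mul_assoc, ← pow_succ', Nat.sub_add_cancel hp1, hyp, ← Algebra.commutes]
  have hypp : y ^ (p * (p - 1)) = algebraMap K (AW K p a b) (b ^ (p - 1)) := by
    rw [pow_mul, hyp, ← map_pow]
  have hkeyW : (x * y) ^ p - (x * y) = algebraMap K (AW K p a b) (a * b) := by
    have h1 := aux_key_pow (x * y) y hyz p hp1 h0W p
    have hcom : Commute (algebraMap K (AW K p a b) b) x := Algebra.commutes b x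
    rw [aux_prod_eq (K := K) p, hxyp, hypp,
      hcom.mul_pow, ← map_pow, hxp, ← map_mul] at h1
    have hbinv : algebraMap K (AW K p a b) (b ^ (p - 1)) *
        algebraMap K (AW K p a b) ((b ^ (p - 1))⁻¹) = 1 := by
      rw [← map_mul, mul_inv_cancel₀ (pow_ne_zero _ hb), map_one]
    calc (x * y) ^ p - (x * y)
        = ((x * y) ^ p - (x * y)) * (algebraMap K (AW K p a b) (b ^ (p - 1)) *
            algebraMap K (AW K p a b) ((b ^ (p - 1))⁻¹)) := by rw [hbinv, mul_one]
      _ = (((x * y) ^ p - (x * y)) * algebraMap K (AW K p a b) (b ^ (p - 1))) *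
            algebraMap K (AW K p a b) ((b ^ (p - 1))⁻¹) := by rw [mul_assoc]
      _ = algebraMap K (AW K p a b) (b ^ p * a) *
            algebraMap K (AW K p a b) ((b ^ (p - 1))⁻¹) := by rw [← h1]
      _ = algebraMap K (AW K p a b) (b ^ p * a * (b ^ (p - 1))⁻¹) := by rw [← map_mul]
      _ = algebraMap K (AW K p a b) (a * b) := by
            congr 1
            rw [hbp]
            field_simp
  -- forward hom
  let F : FreeAlgebra K (Fin 2) →ₐ[K] AW K p a b := FreeAlgebra.lift K ![x * y, y]
  have hF0 : F (FreeAlgebra.ι K (0 : Fin 2)) = x * y := by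
    simp [F]
  have hF1 : F (FreeAlgebra.ι K (1 : Fin 2)) = y := by
    simp [F]
  have hFrel : ∀ ⦃m n : FreeAlgebra K (Fin 2)⦄, RelAS K p a b m n → F m = F n := by
    rintro m n (_ | _ | _)
    · rw [map_sub, map_pow, hF0, AlgHom.commutes]; exact hkeyW
    · rw [map_pow, hF1, AlgHom.commutes]; exact hyp
    · rw [map_mul, map_add, map_mul, hF0, hF1]; exact hyz
  let φ : AAS K p a b →ₐ[K] AW K p a b := RingQuot.liftAlgHom K ⟨F, hFrel⟩
  -- facts in AAS
  have hupp : u ^ (p * (p - 1)) = algebraMap K (AAS K p a b) (b ^ (p - 1)) := by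
    rw [pow_mul, hup, ← map_pow]
  have hw : (z * u ^ (p - 1)) ^ p = algebraMap K (AAS K p a b) (a * b * b ^ (p - 1)) := by
    have h1 := aux_key_pow z u huz p hp1 h0AS p
    rw [aux_prod_eq (K := K) p, hzp, hupp, ← map_mul] at h1
    exact h1
  have hzub : z * u ^ (p - 1) * u = algebraMap K (AAS K p a b) b * z := by
    rw [mul_assoc, ← pow_succ, Nat.sub_add_cancel hp1, hup, ← Algebra.commutes]
  -- let c := b⁻¹ scalar
  have hcb : algebraMap K (AAS K p a b) b⁻¹ * algebraMap K (AAS K p a b) b = 1 := by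
    rw [← map_mul, inv_mul_cancel₀ hb, map_one]
  have hGx : algebraMap K (AAS K p a b) b⁻¹ * (z * u ^ (p - 1)) * u = z := by
    rw [mul_assoc, hzub, ← mul_assoc, hcb, one_mul]
  let G : FreeAlgebra K (Fin 2) →ₐ[K] AAS K p a b :=
    FreeAlgebra.lift K ![algebraMap K (AAS K p a b) b⁻¹ * (z * u ^ (p - 1)), u]
  have hG0 : G (FreeAlgebra.ι K (0 : Fin 2)) =
      algebraMap K (AAS K p a b) b⁻¹ * (z * u ^ (p - 1)) := by simp [G]
  have hG1 : G (FreeAlgebra.ι K (1 : Fin 2)) = u := by simp [G]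
  have hGrel : ∀ ⦃m n : FreeAlgebra K (Fin 2)⦄, RelW K p a b m n → G m = G n := by
    rintro m n (_ | _ | _)
    · -- xrel
      rw [map_pow, hG0, AlgHom.commutes]
      have hcom : Commute (algebraMap K (AAS K p a b) b⁻¹) (z * u ^ (p - 1)) :=
        Algebra.commutes b⁻¹ (z * u ^ (p - 1))
      rw [hcom.mul_pow, ← map_pow, hw, ← map_mul]
      congr 1
      have e : a * b * b ^ (p - 1) = a * b ^ p := by rw [hbp]; ring
      rw [e, inv_pow]
      field_simp
    · rw [map_pow, hG1, AlgHom.commutes]; exact hup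
    · -- yxrel : u * Gx = Gx * u + 1
      rw [map_mul, map_add, map_mul, map_one, hG0, hG1, hGx]
      calc u * (algebraMap K (AAS K p a b) b⁻¹ * (z * u ^ (p - 1)))
          = algebraMap K (AAS K p a b) b⁻¹ * (u * z * u ^ (p - 1)) := by
            rw [← mul_assoc, ← Algebra.commutes b⁻¹ u, mul_assoc, mul_assoc]
        _ = algebraMap K (AAS K p a b) b⁻¹ * ((z * u + u) * u ^ (p - 1)) := by rw [huz]
        _ = algebraMap K (AAS K p a b) b⁻¹ * (z * u ^ p + u ^ p) := by
            have huu : u * u ^ (p - 1) = u ^ p := by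
              rw [← pow_succ']
              exact congrArg (fun n => u ^ n) (Nat.sub_add_cancel hp1)
            congr 1
            rw [add_mul, mul_assoc, huu]
        _ = z + 1 := by
            rw [hup, mul_add, hcb, ← Algebra.commutes b z, ← mul_assoc, hcb, one_mul]
  let ψ : AW K p a b →ₐ[K] AAS K p a b := RingQuot.liftAlgHom K ⟨G, hGrel⟩
  have hφz : φ z = x * y := by
    rw [hzd]
    exact (RingQuot.liftAlgHom_mkAlgHom_apply K F hFrel _).trans hF0
  have hφu : φ u = y := by
    rw [hud]
    exact (RingQuot.liftAlgHom_mkAlgHom_apply K F hFrel _).trans hF1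
  have hψx : ψ x = algebraMap K (AAS K p a b) b⁻¹ * (z * u ^ (p - 1)) := by
    rw [hxd]
    exact (RingQuot.liftAlgHom_mkAlgHom_apply K G hGrel _).trans hG0
  have hψy : ψ y = u := by
    rw [hyd]
    exact (RingQuot.liftAlgHom_mkAlgHom_apply K G hGrel _).trans hG1
  have hcbW : algebraMap K (AW K p a b) b⁻¹ * algebraMap K (AW K p a b) b = 1 := by
    rw [← map_mul, inv_mul_cancel₀ hb, map_one]
  have hφψx : φ (algebraMap K (AAS K p a b) b⁻¹ * (z * u ^ (p - 1))) = x := by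
    rw [map_mul, AlgHom.commutes, map_mul, map_pow, hφz, hφu, hxyp, ← mul_assoc, hcbW, one_mul]
  have hc1 : φ.comp ψ = AlgHom.id K (AW K p a b) := by
    refine RingQuot.ringQuot_ext' K _ _ ?_
    apply FreeAlgebra.hom_ext
    funext i
    fin_cases i
    · show φ (ψ x) = x
      rw [hψx, hφψx]
    · show φ (ψ y) = y
      rw [hψy, hφu]
  have hc2 : ψ.comp φ = AlgHom.id K (AAS K p a b) := by
    refine RingQuot.ringQuot_ext' K _ _ ?_
    apply FreeAlgebra.hom_ext
    funext i
    fin_cases i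
    · show ψ (φ z) = z
      rw [hφz, map_mul, hψx, hψy, hGx]
    · show ψ (φ u) = u
      rw [hφu, hψy]
  refine ⟨AlgEquiv.ofAlgHom φ ψ hc1 hc2, ?_, ?_⟩
  · exact hφz
  · exact hφu

end
end

section
/- Let R be a commutative ring and C an R-algebra generated by elements x_1,…,x_m and y_1,…,y_n such that the x_i pairwise commute, the y_j pairwise commute, and for all i, j the commutator [y_j, x_i] = y_j x_i − x_i y_j lies in the R-subalgebra of C generated by x_1,…,x_{i−1}, y_1,…,y_{j−1}. Then: (1) C is spanned as an R-module by the ordered monomials x_1^{a_1}⋯x_m^{a_m} y_1^{b_1}⋯y_n^{b_n} (a_q, b_r ∈ ℕ); and (2) for each i, j there exists a polynomial c_{i,j} ∈ R[X_1,…,X_{i−1}][Y_1,…,Y_{j−1}] (commuting variables) such that [y_j, x_i] = c_{i,j}(x_1,…,x_{i−1}, y_1,…,y_{j−1}). -/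
noncomputable section

/-- The product `∏ i, x i ^ e i` over the support of `e`, with factors multiplied in
increasing order of the index. -/
def ordProd {σ M : Type*} [LinearOrder σ] [Monoid M] (x : σ → M) (e : σ →₀ ℕ) : M :=
  ((e.support.sort (· ≤ ·)).map fun i => x i ^ e i).prod

/-- Evaluation of a multivariate polynomial in a (possibly noncommutative) algebra:
each monomial is evaluated as the ordered product of the powers of the substituted
values, the variables being multiplied in increasing order of their (linearly ordered)
index.  For the lexicographic sum `Fin m ⊕ₗ Fin n` this multiplies all `X`-values (in
increasing order of the index) to the left of all `Y`-values (in increasing order of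
the index), which is the evaluation of a polynomial in `R[X_1,…,X_m][Y_1,…,Y_n]`. -/
def pEval {σ R A : Type*} [LinearOrder σ] [CommSemiring R] [Semiring A] [Algebra R A]
    (x : σ → A) (q : MvPolynomial σ R) : A :=
  q.support.sum fun e => MvPolynomial.coeff e q • ordProd x e

namespace PBW

variable {C : Type*} [Monoid C]

theorem prod_pow_mul_prod_pow {ι : Type*} (z : ι → C) (hz : ∀ i i', Commute (z i) (z i'))
    (l : List ι) (a b : ι → ℕ) :
    (l.map fun i => z i ^ a i).prod * (l.map fun i => z i ^ b i).prod
      = (l.map fun i => z i ^ (a i + b i)).prod := by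
  induction l with
  | nil => simp
  | cons i l ih =>
    have h : Commute (z i ^ b i) ((l.map fun i => z i ^ a i).prod) := by
      apply Commute.list_prod_right
      intro w hw
      obtain ⟨i', _, rfl⟩ := List.mem_map.1 hw
      exact ((hz i i').pow_pow _ _)
    simp only [List.map_cons, List.prod_cons]
    calc z i ^ a i * (l.map fun i => z i ^ a i).prod * (z i ^ b i * (l.map fun i => z i ^ b i).prod)
        = z i ^ a i * ((l.map fun i => z i ^ a i).prod * z i ^ b i) * (l.map fun i => z i ^ b i).prod := by
          simp [mul_assoc]
      _ = z i ^ a i * (z i ^ b i * (l.map fun i => z i ^ a i).prod) * (l.map fun i => z i ^ b i).prod := by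
          rw [h.eq]
      _ = z i ^ (a i + b i) * ((l.map fun i => z i ^ a i).prod * (l.map fun i => z i ^ b i).prod) := by
          rw [pow_add]; simp [mul_assoc]
      _ = _ := by rw [ih]

theorem prod_pow_zero {ι : Type*} (z : ι → C) (l : List ι) (a : ι → ℕ)
    (h : ∀ i ∈ l, a i = 0) : (l.map fun i => z i ^ a i).prod = 1 := by
  induction l with
  | nil => simp
  | cons i l ih =>
    simp only [List.map_cons, List.prod_cons]
    rw [h i (by simp), ih fun i' hi' => h i' (by simp [hi'])]
    simp

theorem prod_pow_single {ι : Type*} [DecidableEq ι] (z : ι → C) (l : List ι) (hl : l.Nodup)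
    (i₀ : ι) (hi : i₀ ∈ l) (k : ℕ) :
    (l.map fun i => z i ^ (if i = i₀ then k else 0)).prod = z i₀ ^ k := by
  induction l with
  | nil => simp at hi
  | cons i l ih =>
    simp only [List.map_cons, List.prod_cons]
    rcases List.mem_cons.1 hi with rfl | hi'
    · rw [if_pos rfl, prod_pow_zero]
      · simp
      · intro i' hi'
        rw [if_neg]
        rintro rfl
        exact (List.nodup_cons.1 hl).1 hi'
    · rw [if_neg (by rintro rfl; exact (List.nodup_cons.1 hl).1 hi'), pow_zero,
        ih (List.nodup_cons.1 hl).2 hi', one_mul]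

theorem prod_pow_eq_list_prod {ι : Type*} (z : ι → C) (l : List ι) (a : ι → ℕ) :
    ∃ w : List ι, (∀ i ∈ w, i ∈ l ∧ a i ≠ 0) ∧
      (w.map z).prod = (l.map fun i => z i ^ a i).prod := by
  induction l with
  | nil => exact ⟨[], by simp⟩
  | cons i l ih =>
    obtain ⟨w, hw, hprod⟩ := ih
    refine ⟨(if a i = 0 then [] else List.replicate (a i) i) ++ w, ?_, ?_⟩
    · intro i' hi'
      rcases List.mem_append.1 hi' with h | h
      · split_ifs at h with h0
        · simp at h
        · obtain ⟨-, rfl⟩ := List.mem_replicate.1 h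
          exact ⟨by simp, h0⟩
      · exact ⟨by simp [(hw i' h).1], (hw i' h).2⟩
    · rw [List.map_append, List.prod_append, hprod]
      simp only [List.map_cons, List.prod_cons]
      split_ifs with h0
      · simp [h0]
      · simp [List.map_replicate, List.prod_replicate]

/-- `z 1 ^ e 1 * ⋯ * z k ^ e k`. -/
def fprod {k : ℕ} (z : Fin k → C) (e : Fin k → ℕ) : C :=
  ((List.finRange k).map fun i => z i ^ e i).prod

theorem fprod_add {k : ℕ} (z : Fin k → C) (hz : ∀ i i', Commute (z i) (z i'))
    (a b : Fin k → ℕ) : fprod z (a + b) = fprod z a * fprod z b :=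
  (prod_pow_mul_prod_pow z hz _ a b).symm

theorem fprod_zero {k : ℕ} (z : Fin k → C) : fprod z 0 = 1 :=
  prod_pow_zero z _ _ fun _ _ => rfl

theorem fprod_single {k : ℕ} (z : Fin k → C) (i₀ : Fin k) (d : ℕ) :
    fprod z (fun i => if i = i₀ then d else 0) = z i₀ ^ d :=
  prod_pow_single z _ (List.nodup_finRange k) i₀ (List.mem_finRange i₀) d

theorem fprod_eq_list_prod {k : ℕ} (z : Fin k → C) (e : Fin k → ℕ) :
    ∃ w : List (Fin k), (∀ i ∈ w, e i ≠ 0) ∧ (w.map z).prod = fprod z e := by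
  obtain ⟨w, hw, hp⟩ := prod_pow_eq_list_prod z (List.finRange k) e
  exact ⟨w, fun i hi => (hw i hi).2, hp⟩

variable {R : Type*} [CommRing R] {C' : Type*} [Ring C'] [Algebra R C']
variable {m n : ℕ} (x : Fin m → C') (y : Fin n → C')

/-- span of ordered monomials with `x`-indices `< i` and `y`-indices `< j`. -/
def Mspan (i j : ℕ) : Submodule R C' :=
  Submodule.span R {a | ∃ (e : Fin m → ℕ) (f : Fin n → ℕ), (∀ i', e i' ≠ 0 → (i' : ℕ) < i) ∧
    (∀ j', f j' ≠ 0 → (j' : ℕ) < j) ∧ a = fprod x e * fprod y f}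

theorem mon_mem {i j : ℕ} {e : Fin m → ℕ} {f : Fin n → ℕ}
    (he : ∀ i', e i' ≠ 0 → (i' : ℕ) < i) (hf : ∀ j', f j' ≠ 0 → (j' : ℕ) < j) :
    fprod x e * fprod y f ∈ Mspan (R := R) x y i j :=
  Submodule.subset_span ⟨e, f, he, hf, rfl⟩

theorem one_mem_Mspan (i j : ℕ) : (1 : C') ∈ Mspan (R := R) x y i j := by
  have := mon_mem (R := R) x y (i := i) (j := j) (e := 0) (f := 0)
    (fun i' h => absurd rfl h) (fun j' h => absurd rfl h)
  rwa [fprod_zero, fprod_zero, one_mul] at this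

theorem Mspan_mono {i j i' j' : ℕ} (hi : i ≤ i') (hj : j ≤ j') :
    Mspan (R := R) x y i j ≤ Mspan (R := R) x y i' j' := by
  apply Submodule.span_mono
  rintro a ⟨e, f, he, hf, rfl⟩
  exact ⟨e, f, fun i'' h => lt_of_lt_of_le (he i'' h) hi,
    fun j'' h => lt_of_lt_of_le (hf j'' h) hj, rfl⟩

theorem LX (hx : ∀ i i', Commute (x i) (x i'))
    {i j : ℕ} {e : Fin m → ℕ} (he : ∀ i', e i' ≠ 0 → (i' : ℕ) < i)
    {z : C'} (hz : z ∈ Mspan (R := R) x y i j) :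
    fprod x e * z ∈ Mspan (R := R) x y i j := by
  induction hz using Submodule.span_induction with
  | mem a ha =>
    obtain ⟨p, q, hp, hq, rfl⟩ := ha
    rw [← mul_assoc, ← fprod_add x hx]
    exact mon_mem x y (fun i' h => by
      by_cases h0 : e i' = 0
      · exact hp i' (by simpa [h0] using h)
      · exact he i' h0) hq
  | zero => simp
  | add a b _ _ ha hb => rw [mul_add]; exact add_mem ha hb
  | smul r a _ ha => rw [mul_smul_comm]; exact Submodule.smul_mem _ r ha


theorem RY (hy : ∀ j j', Commute (y j) (y j'))
    {i j : ℕ} {f : Fin n → ℕ} (hf : ∀ j', f j' ≠ 0 → (j' : ℕ) < j)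
    {z : C'} (hz : z ∈ Mspan (R := R) x y i j) :
    z * fprod y f ∈ Mspan (R := R) x y i j := by
  induction hz using Submodule.span_induction with
  | mem a ha =>
    obtain ⟨p, q, hp, hq, rfl⟩ := ha
    rw [mul_assoc, ← fprod_add y hy]
    exact mon_mem x y hp (fun j' h => by
      by_cases h0 : q j' = 0
      · exact hf j' (by simpa [h0] using h)
      · exact hq j' h0)
  | zero => simp
  | add a b _ _ ha hb => rw [add_mul]; exact add_mem ha hb
  | smul r a _ ha => rw [smul_mul_assoc]; exact Submodule.smul_mem _ r ha

theorem x_eq_fprod (i₀ : Fin m) : x i₀ = fprod x (fun i' => if i' = i₀ then 1 else 0) := by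
  rw [fprod_single, pow_one]

theorem y_eq_fprod (j₀ : Fin n) : y j₀ = fprod y (fun j' => if j' = j₀ then 1 else 0) := by
  rw [fprod_single, pow_one]

theorem x_mem {i j : ℕ} (i₀ : Fin m) (hi₀ : (i₀ : ℕ) < i) :
    x i₀ ∈ Mspan (R := R) x y i j := by
  have := mon_mem (R := R) x y (i := i) (j := j) (e := fun i' => if i' = i₀ then 1 else 0) (f := 0)
    (fun i' h => by
      rcases eq_or_ne i' i₀ with rfl | h0
      · exact hi₀
      · simp [h0] at h)
    (fun j' h => absurd rfl h)
  rwa [fprod_zero, mul_one, ← x_eq_fprod] at this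

theorem y_mem {i j : ℕ} (j₀ : Fin n) (hj₀ : (j₀ : ℕ) < j) :
    y j₀ ∈ Mspan (R := R) x y i j := by
  have := mon_mem (R := R) x y (i := i) (j := j) (e := 0) (f := fun j' => if j' = j₀ then 1 else 0)
    (fun i' h => absurd rfl h)
    (fun j' h => by
      rcases eq_or_ne j' j₀ with rfl | h0
      · exact hj₀
      · simp [h0] at h)
  rwa [fprod_zero, one_mul, ← y_eq_fprod] at this

theorem Lx (hx : ∀ i i', Commute (x i) (x i'))
    {i j : ℕ} (i₀ : Fin m) (hi₀ : (i₀ : ℕ) < i)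
    {z : C'} (hz : z ∈ Mspan (R := R) x y i j) :
    x i₀ * z ∈ Mspan (R := R) x y i j := by
  rw [x_eq_fprod x i₀]
  refine LX x y hx (fun i' h => ?_) hz
  rcases eq_or_ne i' i₀ with rfl | h0
  · exact hi₀
  · simp [h0] at h

theorem W (hx : ∀ i i', Commute (x i) (x i')) {i j : ℕ} (w : List (Fin m))
    (hw : ∀ i' ∈ w, (i' : ℕ) < i) : (w.map x).prod ∈ Mspan (R := R) x y i j := by
  induction w with
  | nil => simpa using one_mem_Mspan (R := R) x y i j
  | cons i₀ w ih =>
    simp only [List.map_cons, List.prod_cons]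
    exact Lx x y hx i₀ (hw i₀ (by simp)) (ih fun i' h => hw i' (by simp [h]))


/-- generators with bounded indices -/
def genSet (i j : ℕ) : Set C' :=
  {a | ∃ i' : Fin m, (i' : ℕ) < i ∧ a = x i'} ∪ {a | ∃ j' : Fin n, (j' : ℕ) < j ∧ a = y j'}

theorem key (hx : ∀ i i', Commute (x i) (x i')) (hy : ∀ j j', Commute (y j) (y j'))
    (hcom : ∀ (i : Fin m) (j : Fin n), y j * x i - x i * y j ∈
      Algebra.adjoin R (genSet x y (i : ℕ) (j : ℕ))) :
    ∀ j : ℕ,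
      (∀ i : ℕ, ∀ f : Fin n → ℕ, (∀ j', f j' ≠ 0 → (j' : ℕ) < j) →
        ∀ w : List (Fin m), (∀ i' ∈ w, (i' : ℕ) < i) →
          fprod y f * (w.map x).prod ∈ Mspan (R := R) x y i j) ∧
      (∀ i : ℕ, ∀ z ∈ Algebra.adjoin R (genSet x y i j), z ∈ Mspan (R := R) x y i j) := by
  intro j
  induction j using Nat.strong_induction_on with
  | _ j IH =>
  have L1 : ∀ i : ℕ, ∀ j₀ : Fin n, (j₀ : ℕ) < j →
      ∀ w : List (Fin m), (∀ i' ∈ w, (i' : ℕ) < i) →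
      y j₀ * (w.map x).prod ∈ Mspan (R := R) x y i ((j₀ : ℕ) + 1) := by
    intro i j₀ hj₀ w
    induction w with
    | nil => intro _; simpa using y_mem (R := R) x y j₀ (Nat.lt_succ_self _)
    | cons i₀ w ihw =>
      intro hw
      have hi₀ : (i₀ : ℕ) < i := hw i₀ (by simp)
      have hw' : ∀ i' ∈ w, (i' : ℕ) < i := fun i' h => hw i' (by simp [h])
      have split : y j₀ * ((i₀ :: w).map x).prod
          = x i₀ * (y j₀ * (w.map x).prod)
            + (y j₀ * x i₀ - x i₀ * y j₀) * (w.map x).prod := by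
        simp only [List.map_cons, List.prod_cons]
        noncomm_ring
      rw [split]
      refine add_mem (Lx x y hx i₀ hi₀ (ihw hw')) ?_
      have hc : y j₀ * x i₀ - x i₀ * y j₀ ∈ Mspan (R := R) x y (i₀ : ℕ) (j₀ : ℕ) :=
        (IH (j₀ : ℕ) hj₀).2 (i₀ : ℕ) _ (hcom i₀ j₀)
      suffices hgen : ∀ c ∈ Mspan (R := R) x y (i₀ : ℕ) (j₀ : ℕ),
          c * (w.map x).prod ∈ Mspan (R := R) x y i ((j₀ : ℕ) + 1) from hgen _ hc
      intro c hc
      induction hc using Submodule.span_induction with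
      | mem a ha =>
        obtain ⟨g, h, hg, hh, rfl⟩ := ha
        have h1 : fprod y h * (w.map x).prod ∈ Mspan (R := R) x y i (j₀ : ℕ) :=
          (IH (j₀ : ℕ) hj₀).1 i h hh w hw'
        have h2 := LX (R := R) x y hx
          (fun i' h' => lt_trans (hg i' h') hi₀) h1
        rw [mul_assoc]
        exact Mspan_mono x y le_rfl (Nat.le_succ _) h2
      | zero => simp
      | add a b _ _ ha hb => rw [add_mul]; exact add_mem ha hb
      | smul r a _ ha => rw [smul_mul_assoc]; exact Submodule.smul_mem _ r ha
  have Ly : ∀ i : ℕ, ∀ j₀ : Fin n, (j₀ : ℕ) < j →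
      ∀ z ∈ Mspan (R := R) x y i j, y j₀ * z ∈ Mspan (R := R) x y i j := by
    intro i j₀ hj₀ z hz
    induction hz using Submodule.span_induction with
    | mem a ha =>
      obtain ⟨e, h, he, hh, rfl⟩ := ha
      rw [← mul_assoc]
      obtain ⟨w, hwmem, hwprod⟩ := fprod_eq_list_prod x e
      have hw : ∀ i' ∈ w, (i' : ℕ) < i := fun i' h' => he i' (hwmem i' h')
      have h1 := L1 i j₀ hj₀ w hw
      rw [hwprod] at h1
      exact RY x y hy hh (Mspan_mono x y le_rfl (by omega) h1)
    | zero => simp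
    | add a b _ _ ha hb => rw [mul_add]; exact add_mem ha hb
    | smul r a _ ha => rw [mul_smul_comm]; exact Submodule.smul_mem _ r ha
  have S : ∀ i : ℕ, ∀ f : Fin n → ℕ, (∀ j', f j' ≠ 0 → (j' : ℕ) < j) →
      ∀ w : List (Fin m), (∀ i' ∈ w, (i' : ℕ) < i) →
      fprod y f * (w.map x).prod ∈ Mspan (R := R) x y i j := by
    intro i
    suffices H : ∀ N : ℕ, ∀ f : Fin n → ℕ, Finset.univ.sum f = N →
        (∀ j', f j' ≠ 0 → (j' : ℕ) < j) →
        ∀ w : List (Fin m), (∀ i' ∈ w, (i' : ℕ) < i) →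
        fprod y f * (w.map x).prod ∈ Mspan (R := R) x y i j by
      exact fun f hf w hw => H _ f rfl hf w hw
    intro N
    induction N using Nat.strong_induction_on with
    | _ N IHN =>
    intro f hNf hf w hw
    by_cases h0 : ∀ j', f j' = 0
    · rw [show fprod y f = 1 from prod_pow_zero y _ _ fun j' _ => h0 j', one_mul]
      exact W x y hx w hw
    · push_neg at h0
      obtain ⟨j₀, hj₀f⟩ := h0
      have hj₀ : (j₀ : ℕ) < j := hf j₀ hj₀f
      set f' : Fin n → ℕ := Function.update f j₀ (f j₀ - 1) with hf'def
      have hsplit : f = (fun j' => if j' = j₀ then 1 else 0) + f' := by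
        funext j'
        rcases eq_or_ne j' j₀ with rfl | hne
        · simp only [Pi.add_apply, if_pos rfl, hf'def, Function.update_self]
          simp
          omega
        · simp [hf'def, Function.update_of_ne hne, hne]
      have hsum : Finset.univ.sum f' < N := by
        have h2 : Finset.univ.sum f = 1 + Finset.univ.sum f' := by
          rw [hsplit]
          show (Finset.univ.sum fun j' => (if j' = j₀ then 1 else 0) + f' j') = _
          rw [Finset.sum_add_distrib]
          simp [Finset.sum_ite_eq']
        omega
      have hfy : fprod y f = y j₀ * fprod y f' := by
        rw [hsplit, fprod_add y hy, ← y_eq_fprod]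
      have hf'b : ∀ j', f' j' ≠ 0 → (j' : ℕ) < j := by
        intro j' h'
        rcases eq_or_ne j' j₀ with rfl | hne
        · exact hj₀
        · exact hf j' (by rwa [hf'def, Function.update_of_ne hne] at h')
      rw [hfy, mul_assoc]
      exact Ly i j₀ hj₀ _ (IHN _ hsum f' rfl hf'b w hw)
  have Amul : ∀ i : ℕ, Mspan (R := R) x y i j * Mspan (R := R) x y i j
      ≤ Mspan (R := R) x y i j := by
    intro i
    rw [Mspan, Submodule.span_mul_span]
    apply Submodule.span_le.2
    rintro _ ⟨a, ⟨e, f, he, hf, rfl⟩, b, ⟨e', f', he', hf', rfl⟩, rfl⟩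
    have h1 : fprod y f * fprod x e' ∈ Mspan (R := R) x y i j := by
      obtain ⟨w, hwmem, hwprod⟩ := fprod_eq_list_prod x e'
      rw [← hwprod]
      exact S i f hf w fun i' h' => he' i' (hwmem i' h')
    have h3 : fprod x e * (fprod y f * fprod x e' * fprod y f')
        ∈ Mspan (R := R) x y i j := LX x y hx he (RY x y hy hf' h1)
    show fprod x e * fprod y f * (fprod x e' * fprod y f') ∈ Mspan (R := R) x y i j
    rw [show fprod x e * fprod y f * (fprod x e' * fprod y f')
      = fprod x e * (fprod y f * fprod x e' * fprod y f') by noncomm_ring]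
    exact h3
  refine ⟨S, ?_⟩
  intro i z hz
  induction hz using Algebra.adjoin_induction with
  | mem a ha =>
    rcases ha with ⟨i', hi', rfl⟩ | ⟨j', hj', rfl⟩
    · exact x_mem x y i' hi'
    · exact y_mem x y j' hj'
  | algebraMap r =>
    rw [Algebra.algebraMap_eq_smul_one]
    exact Submodule.smul_mem _ r (one_mem_Mspan x y i j)
  | add a b _ _ ha hb => exact add_mem ha hb
  | mul a b _ _ ha hb => exact Amul i (Submodule.mul_mem_mul ha hb)



section pEvalLemmas

variable {σ R A : Type*} [LinearOrder σ] [CommSemiring R] [Semiring A] [Algebra R A]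

theorem pEval_eq_sum (x : σ → A) (q : MvPolynomial σ R) :
    pEval x q = Finsupp.sum (AddMonoidAlgebra.coeff q) fun e r => r • ordProd x e := rfl

theorem pEval_zero (x : σ → A) : pEval x (0 : MvPolynomial σ R) = 0 := by
  rw [pEval_eq_sum]; exact Finsupp.sum_zero_index

theorem pEval_add (x : σ → A) (q q' : MvPolynomial σ R) :
    pEval x (q + q') = pEval x q + pEval x q' := by
  simp only [pEval_eq_sum]
  rw [AddMonoidAlgebra.coeff_add]
  exact Finsupp.sum_add_index' (fun e => zero_smul R _) (fun e r r' => add_smul r r' _)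

theorem pEval_smul (x : σ → A) (r : R) (q : MvPolynomial σ R) :
    pEval x (r • q) = r • pEval x q := by
  simp only [pEval_eq_sum]
  rw [AddMonoidAlgebra.coeff_smul]
  refine Eq.trans (Finsupp.sum_smul_index' (h0 := fun e => zero_smul R _)) ?_
  rw [Finsupp.smul_sum]
  exact Finsupp.sum_congr fun e _ => by rw [smul_eq_mul, mul_smul]

theorem pEval_monomial (x : σ → A) (E : σ →₀ ℕ) (r : R) :
    pEval x (MvPolynomial.monomial E r) = r • ordProd x E := by
  classical
  rcases eq_or_ne r 0 with rfl | hr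
  · rw [map_zero, pEval_zero, zero_smul]
  · rw [pEval]
    rw [MvPolynomial.support_monomial, if_neg hr, Finset.sum_singleton,
      MvPolynomial.coeff_monomial, if_pos rfl]

theorem filter_map_prod {M : Type*} [Monoid M] (x : σ → M) (e : σ →₀ ℕ) (L : List σ)
    (p : σ → Bool) (hp : ∀ v, p v = false → e v = 0) :
    ((L.filter p).map fun i => x i ^ e i).prod
      = (L.map fun i => x i ^ e i).prod := by
  induction L with
  | nil => simp
  | cons v L ih =>
    rcases Bool.eq_false_or_eq_true (p v) with hv | hv
    · rw [List.filter_cons_of_pos (by simp [hv])]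
      simp only [List.map_cons, List.prod_cons, ih]
    · rw [List.filter_cons_of_neg (by simp [hv])]
      simp only [List.map_cons, List.prod_cons, ih]
      rw [hp v hv, pow_zero, one_mul]

theorem ordProd_eq_prod_list {M : Type*} [Monoid M] (x : σ → M) (e : σ →₀ ℕ)
    (L : List σ) (hs : L.Pairwise (· ≤ ·)) (hn : L.Nodup) (hmem : ∀ v ∈ e.support, v ∈ L) :
    ordProd x e = (L.map fun i => x i ^ e i).prod := by
  classical
  have hperm : (e.support.sort (· ≤ ·)).Perm (L.filter fun v => v ∈ e.support) := by
    apply List.perm_of_nodup_nodup_toFinset_eq (Finset.sort_nodup _ _) (hn.filter _)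
    ext a
    simp only [List.mem_toFinset, Finset.mem_sort, List.mem_filter, decide_eq_true_eq]
    exact ⟨fun h => ⟨hmem a h, h⟩, fun h => h.2⟩
  have heq : e.support.sort (· ≤ ·) = L.filter fun v => v ∈ e.support :=
    List.Perm.eq_of_pairwise' (Finset.pairwise_sort _ _) (hs.filter _) hperm
  rw [ordProd, heq]
  refine filter_map_prod x e L _ fun v hv => ?_
  rw [← Finsupp.notMem_support_iff]
  simpa using hv

end pEvalLemmas

section LexList

variable {m n : ℕ}

def LexList (m n : ℕ) : List (Fin m ⊕ₗ Fin n) :=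
  ((List.finRange m).map fun i' => toLex (Sum.inl i'))
    ++ ((List.finRange n).map fun j' => toLex (Sum.inr j'))

theorem LexList_sorted : (LexList m n).Pairwise (· ≤ ·) := by
  rw [LexList, List.pairwise_append]
  refine ⟨?_, ?_, ?_⟩
  · exact (List.pairwise_le_finRange m).map _ fun a b h => Sum.Lex.inl_le_inl_iff.mpr h
  · exact (List.pairwise_le_finRange n).map _ fun a b h => Sum.Lex.inr_le_inr_iff.mpr h
  · rintro a ha b hb
    obtain ⟨i', -, rfl⟩ := List.mem_map.1 ha
    obtain ⟨j', -, rfl⟩ := List.mem_map.1 hb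
    exact Sum.Lex.inl_le_inr _ _

theorem LexList_nodup : (LexList m n).Nodup := by
  rw [LexList]
  refine List.Nodup.append ?_ ?_ ?_
  · exact (List.nodup_finRange m).map fun a b h => Sum.inl_injective (toLex_inj.1 h)
  · exact (List.nodup_finRange n).map fun a b h => Sum.inr_injective (toLex_inj.1 h)
  · intro a ha hb
    obtain ⟨i', -, rfl⟩ := List.mem_map.1 ha
    obtain ⟨j', -, h⟩ := List.mem_map.1 hb
    exact Sum.inl_ne_inr (toLex_inj.1 h).symm

theorem LexList_mem (v : Fin m ⊕ₗ Fin n) : v ∈ LexList m n := by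
  rcases h : ofLex v with i' | j'
  · have hv : v = toLex (Sum.inl i') := by rw [← h]; rfl
    rw [hv, LexList, List.mem_append]
    exact Or.inl (List.mem_map.2 ⟨i', List.mem_finRange i', rfl⟩)
  · have hv : v = toLex (Sum.inr j') := by rw [← h]; rfl
    rw [hv, LexList, List.mem_append]
    exact Or.inr (List.mem_map.2 ⟨j', List.mem_finRange j', rfl⟩)

theorem LexList_map_prod {M : Type*} [Monoid M] (g : (Fin m ⊕ₗ Fin n) → M) :
    ((LexList m n).map g).prod
      = ((List.finRange m).map fun i' => g (toLex (Sum.inl i'))).prod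
        * ((List.finRange n).map fun j' => g (toLex (Sum.inr j'))).prod := by
  rw [LexList, List.map_append, List.prod_append, List.map_map, List.map_map]
  rfl

end LexList


end PBW

/-- Let `R` be a commutative ring and `C` an `R`-algebra generated by `x_1,…,x_m` and
`y_1,…,y_n` such that the `x_i` pairwise commute, the `y_j` pairwise commute, and
`[y_j, x_i]` lies in the subalgebra generated by `x_1,…,x_{i−1}, y_1,…,y_{j−1}`.
Then (1) `C` is spanned as an `R`-module by the ordered monomials
`x_1^{a_1}⋯x_m^{a_m} y_1^{b_1}⋯y_n^{b_n}`, and (2) for each `i, j` there is a polynomial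
`c_{i,j} ∈ R[X_1,…,X_{i−1}][Y_1,…,Y_{j−1}]` with
`[y_j, x_i] = c_{i,j}(x_1,…,x_{i−1}, y_1,…,y_{j−1})`. -/
theorem spanning_monomials_and_commutator_polys
    {R : Type*} [CommRing R] {C : Type*} [Ring C] [Algebra R C]
    (m n : ℕ) (x : Fin m → C) (y : Fin n → C)
    (hgen : Algebra.adjoin R (Set.range x ∪ Set.range y) = ⊤)
    (hx : ∀ i i', Commute (x i) (x i'))
    (hy : ∀ j j', Commute (y j) (y j'))
    (hcom : ∀ i j, y j * x i - x i * y j ∈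
      Algebra.adjoin R
        ({a | ∃ i' : Fin m, i' < i ∧ a = x i'} ∪ {a | ∃ j' : Fin n, j' < j ∧ a = y j'})) :
    Submodule.span R {a | ∃ (e : Fin m → ℕ) (f : Fin n → ℕ),
        a = (((List.finRange m).map fun i => x i ^ e i).prod) *
            (((List.finRange n).map fun j => y j ^ f j).prod)} = ⊤ ∧
    ∀ i j, ∃ q : MvPolynomial (Fin m ⊕ₗ Fin n) R,
      (∀ v ∈ q.vars,
        (∃ i' : Fin m, i' < i ∧ ofLex v = Sum.inl i') ∨
        (∃ j' : Fin n, j' < j ∧ ofLex v = Sum.inr j')) ∧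
      pEval (fun v => Sum.elim x y (ofLex v)) q = y j * x i - x i * y j := by
  classical
  have hsets : ∀ (i : Fin m) (j : Fin n),
      (({a | ∃ i' : Fin m, i' < i ∧ a = x i'} ∪ {a | ∃ j' : Fin n, j' < j ∧ a = y j'}) : Set C)
        = PBW.genSet x y (i : ℕ) (j : ℕ) := by
    intro i j
    unfold PBW.genSet
    congr 1 <;> ext a <;> simp [Fin.lt_def]
  have hcom' : ∀ (i : Fin m) (j : Fin n), y j * x i - x i * y j ∈
      Algebra.adjoin R (PBW.genSet x y (i : ℕ) (j : ℕ)) := fun i j => hsets i j ▸ hcom i j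
  constructor
  · rw [eq_top_iff]
    intro z _
    have hz : z ∈ Algebra.adjoin R (PBW.genSet x y m n) := by
      have hset2 : PBW.genSet x y m n = Set.range x ∪ Set.range y := by
        unfold PBW.genSet
        congr 1 <;> ext a <;> simp [Fin.isLt, eq_comm]
      rw [hset2, hgen]
      trivial
    have hmem := (PBW.key x y hx hy hcom' n).2 m z hz
    refine Submodule.span_mono ?_ hmem
    rintro a ⟨e, f, -, -, rfl⟩
    exact ⟨e, f, rfl⟩
  · intro i j
    have hc : y j * x i - x i * y j ∈ PBW.Mspan (R := R) x y (i : ℕ) (j : ℕ) :=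
      (PBW.key x y hx hy hcom' (j : ℕ)).2 (i : ℕ) _ (hcom' i j)
    suffices H : ∀ z ∈ PBW.Mspan (R := R) x y (i : ℕ) (j : ℕ),
        ∃ q : MvPolynomial (Fin m ⊕ₗ Fin n) R,
          (∀ v ∈ q.vars,
            (∃ i' : Fin m, i' < i ∧ ofLex v = Sum.inl i') ∨
            (∃ j' : Fin n, j' < j ∧ ofLex v = Sum.inr j')) ∧
          pEval (fun v => Sum.elim x y (ofLex v)) q = z from H _ hc
    intro z hz
    induction hz using Submodule.span_induction with
    | mem a ha =>
      obtain ⟨e, f, he, hf, rfl⟩ := ha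
      refine ⟨MvPolynomial.monomial
        (Finsupp.equivFunOnFinite.symm fun v => Sum.elim e f (ofLex v)) 1, ?_, ?_⟩
      · intro v hv
        have hv' : v ∈ (Finsupp.equivFunOnFinite.symm
            fun v => Sum.elim e f (ofLex v)).support := by
          rcases eq_or_ne (1 : R) 0 with h1 | h1
          · rw [show (MvPolynomial.monomial
                (Finsupp.equivFunOnFinite.symm fun v => Sum.elim e f (ofLex v)) (1 : R)) = 0 by
                rw [h1, map_zero]] at hv
            simp [MvPolynomial.vars_0] at hv
          · rwa [MvPolynomial.vars_monomial h1] at hv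
        rw [Finsupp.mem_support_iff, Finsupp.coe_equivFunOnFinite_symm] at hv'
        rcases hh : ofLex v with i' | j'
        · rw [hh] at hv'
          simp only [Sum.elim_inl] at hv'
          exact Or.inl ⟨i', Fin.lt_def.2 (he i' hv'), rfl⟩
        · rw [hh] at hv'
          simp only [Sum.elim_inr] at hv'
          exact Or.inr ⟨j', Fin.lt_def.2 (hf j' hv'), rfl⟩
      · rw [PBW.pEval_monomial, one_smul]
        rw [PBW.ordProd_eq_prod_list _ _ (PBW.LexList m n) PBW.LexList_sorted
          PBW.LexList_nodup (fun v _ => PBW.LexList_mem v)]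
        rw [PBW.LexList_map_prod]
        show _ = PBW.fprod x e * PBW.fprod y f
        unfold PBW.fprod
        congr 1 <;> refine congrArg List.prod (List.map_congr_left fun v _ => ?_) <;>
          simp [Finsupp.coe_equivFunOnFinite_symm]
    | zero => exact ⟨0, by simp [MvPolynomial.vars_0], PBW.pEval_zero _⟩
    | add a b _ _ ha hb =>
      obtain ⟨q1, hq1v, hq1e⟩ := ha
      obtain ⟨q2, hq2v, hq2e⟩ := hb
      refine ⟨q1 + q2, ?_, by rw [PBW.pEval_add, hq1e, hq2e]⟩
      intro v hv
      rcases Finset.mem_union.1 (MvPolynomial.vars_add_subset q1 q2 hv) with h | h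
      · exact hq1v v h
      · exact hq2v v h
    | smul r a _ ha =>
      obtain ⟨q1, hq1v, hq1e⟩ := ha
      refine ⟨r • q1, ?_, by rw [PBW.pEval_smul, hq1e]⟩
      intro v hv
      apply hq1v
      rw [MvPolynomial.mem_vars] at hv ⊢
      obtain ⟨d, hd, hvd⟩ := hv
      refine ⟨d, ?_, hvd⟩
      rw [MvPolynomial.mem_support_iff] at hd ⊢
      intro h0
      rw [MvPolynomial.coeff_smul, h0, smul_zero] at hd
      exact hd rfl

end
end

section
/- Let C be a unital algebra over ℚ and let X, Y ∈ C be such that a := YX − XY commutes with both X and Y. Then in the formal power series ring C[[s,t]] in two commuting central variables s, t one has exp(tY)·exp(sX) = exp(sX)·exp(tY)·exp(a·st), where exp(tY) := ∑_{n≥0} Y^n t^n/n!, exp(sX) := ∑_{n≥0} X^n s^n/n!, and exp(a·st) := ∑_{n≥0} a^n (st)^n/n!. -/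
noncomputable section

open scoped Classical

open Finset in
private lemma aux_comm {C : Type*} [Ring C] (a X Y : C)
    (hYX : Y * X = X * Y + a) (haX : a * X = X * a) :
    ∀ j : ℕ, Y * X ^ (j + 1) = X ^ (j + 1) * Y + (j + 1) • (X ^ j * a) := by
  intro j
  induction j with
  | zero => simpa using hYX
  | succ j ih =>
      have h : Y * X ^ (j + 2) = (Y * X ^ (j + 1)) * X := by
        rw [pow_succ, ← mul_assoc]
      rw [h, ih, add_mul, mul_assoc (X ^ (j+1)) Y X, hYX, smul_mul_assoc,
        mul_assoc (X ^ j) a X, haX, ← mul_assoc (X ^ j) X a, ← pow_succ,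
        mul_add, ← mul_assoc, ← pow_succ,
        succ_nsmul (X ^ (j+1) * a) (j+1), add_assoc,
        add_comm (X ^ (j+1) * a)]

private lemma aux_comm' {C : Type*} [Ring C] (a X Y : C)
    (hYX : Y * X = X * Y + a) (haX : a * X = X * a)
    (j : ℕ) : Y * X ^ j = X ^ j * Y + j • (X ^ (j - 1) * a) := by
  cases j with
  | zero => simp
  | succ j => simpa using aux_comm a X Y hYX haX j

private lemma choose_id (m n j : ℕ) :
    m.choose (j+1) * (n.choose (j+1) * (j+1).factorial)
      + m.choose j * (n.choose j * j.factorial) * (m - j)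
    = m.choose (j+1) * ((n+1).choose (j+1) * (j+1).factorial) := by
  have h := Nat.choose_succ_right_eq m j
  calc m.choose (j+1) * (n.choose (j+1) * (j+1).factorial)
        + m.choose j * (n.choose j * j.factorial) * (m - j)
      = m.choose (j+1) * (n.choose (j+1) * (j+1).factorial)
        + (m.choose j * (m - j)) * (n.choose j * j.factorial) := by ring
    _ = m.choose (j+1) * (n.choose (j+1) * (j+1).factorial)
        + (m.choose (j+1) * (j+1)) * (n.choose j * j.factorial) := by rw [← h]
    _ = m.choose (j+1) * ((n+1).choose (j+1) * (j+1).factorial) := by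
        rw [Nat.choose_succ_succ, Nat.factorial_succ]; ring

open Finset in
private lemma aux_main {C : Type*} [Ring C] (a X Y : C)
    (hYX : Y * X = X * Y + a) (haX : a * X = X * a)
    (haY : a * Y = Y * a) (m : ℕ) :
    ∀ n : ℕ, Y ^ n * X ^ m = ∑ k ∈ range (n + 1),
      (m.choose k * (n.choose k * k.factorial)) •
        (X ^ (m - k) * (Y ^ (n - k) * a ^ k)) := by
  intro n
  induction n with
  | zero => simp
  | succ n ih =>
    have hc : Commute a Y := haY
    have hYpow : ∀ i : ℕ, a * Y ^ i = Y ^ i * a := fun i => (hc.pow_right i).eq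
    have step : Y ^ (n+1) * X ^ m = Y * (Y ^ n * X ^ m) := by
      rw [pow_succ', mul_assoc]
    rw [step, ih, Finset.mul_sum]
    have key : ∀ k ∈ range (n + 1),
        Y * ((m.choose k * (n.choose k * k.factorial)) •
          (X ^ (m - k) * (Y ^ (n - k) * a ^ k)))
        = (m.choose k * (n.choose k * k.factorial)) •
            (X ^ (m - k) * (Y ^ (n + 1 - k) * a ^ k))
          + (m.choose k * (n.choose k * k.factorial) * (m - k)) •
            (X ^ (m - (k+1)) * (Y ^ (n + 1 - (k+1)) * a ^ (k+1))) := by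
      intro k hk
      have hkn : k ≤ n := Nat.lt_succ_iff.mp (mem_range.mp hk)
      obtain ⟨i, hi⟩ := Nat.exists_eq_add_of_le hkn
      have h1 : n - k = i := by omega
      have h2 : n + 1 - k = i + 1 := by omega
      have h3 : n + 1 - (k + 1) = i := by omega
      have h4 : m - (k + 1) = m - k - 1 := by omega
      rw [h1, h2, h3, h4, mul_smul_comm, ← mul_assoc Y,
        aux_comm' a X Y hYX haX (m - k), add_mul, smul_mul_assoc]
      have e1 : X ^ (m-k) * Y * (Y ^ i * a ^ k) = X ^ (m-k) * (Y ^ (i+1) * a ^ k) := by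
        rw [mul_assoc, ← mul_assoc Y, ← pow_succ']
      have e2 : X ^ (m-k-1) * a * (Y ^ i * a ^ k)
          = X ^ (m-k-1) * (Y ^ i * a ^ (k+1)) := by
        rw [mul_assoc, ← mul_assoc a, hYpow i, mul_assoc (Y ^ i), ← pow_succ']
      rw [e1, e2, smul_add, smul_smul]
    rw [Finset.sum_congr rfl key, Finset.sum_add_distrib]
    have hfirst : ∑ k ∈ range (n + 2),
        (m.choose k * (n.choose k * k.factorial)) •
          (X ^ (m - k) * (Y ^ (n + 1 - k) * a ^ k))
        = ∑ k ∈ range (n + 1),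
        (m.choose k * (n.choose k * k.factorial)) •
          (X ^ (m - k) * (Y ^ (n + 1 - k) * a ^ k)) := by
      rw [Finset.sum_range_succ, Nat.choose_succ_self]
      simp
    set F : ℕ → C := fun k => match k with
      | 0 => 0
      | (j+1) => (m.choose j * (n.choose j * j.factorial) * (m - j)) •
          (X ^ (m - (j+1)) * (Y ^ (n + 1 - (j+1)) * a ^ (j+1))) with hF
    have hsecond : ∑ k ∈ range (n + 1),
        (m.choose k * (n.choose k * k.factorial) * (m - k)) •
          (X ^ (m - (k+1)) * (Y ^ (n + 1 - (k+1)) * a ^ (k+1)))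
        = ∑ k ∈ range (n + 2), F k := by
      rw [Finset.sum_range_succ' F (n+1)]
      simp [hF]
    rw [← hfirst, hsecond, ← Finset.sum_add_distrib]
    refine Finset.sum_congr rfl fun k _ => ?_
    rcases k with _ | j
    · simp [hF]
    · simp only [hF]
      rw [← add_smul, choose_id m n j]

private lemma scalar_id (m n k : ℕ) (hkm : k ≤ m) (hkn : k ≤ n) :
    ((n.factorial : ℚ)⁻¹ * (m.factorial : ℚ)⁻¹) *
        ((m.choose k * (n.choose k * k.factorial) : ℕ) : ℚ)
      = ((m - k).factorial : ℚ)⁻¹ * (((n - k).factorial : ℚ)⁻¹ * ((k.factorial : ℚ)⁻¹)) := by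
  have hm : ((m.choose k : ℚ)) * (k.factorial : ℚ) * ((m - k).factorial : ℚ)
      = (m.factorial : ℚ) := by
    exact_mod_cast Nat.choose_mul_factorial_mul_factorial hkm
  have hn : ((n.choose k : ℚ)) * (k.factorial : ℚ) * ((n - k).factorial : ℚ)
      = (n.factorial : ℚ) := by
    exact_mod_cast Nat.choose_mul_factorial_mul_factorial hkn
  have f3 : (k.factorial : ℚ) ≠ 0 := Nat.cast_ne_zero.mpr k.factorial_ne_zero
  have f4 : ((m - k).factorial : ℚ) ≠ 0 := Nat.cast_ne_zero.mpr (m - k).factorial_ne_zero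
  have f5 : ((n - k).factorial : ℚ) ≠ 0 := Nat.cast_ne_zero.mpr (n - k).factorial_ne_zero
  push_cast
  field_simp
  linear_combination ((n.choose k : ℚ) * (k.factorial : ℚ) * ((n - k).factorial : ℚ)) * hm
    + (m.factorial : ℚ) * hn

open Finset in
private lemma aux_q {C : Type*} [Ring C] [Algebra ℚ C] (a X Y : C)
    (hYX : Y * X = X * Y + a) (haX : a * X = X * a)
    (haY : a * Y = Y * a) (m n : ℕ) :
    ((n.factorial : ℚ)⁻¹ • Y ^ n) * ((m.factorial : ℚ)⁻¹ • X ^ m) =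
      ∑ k ∈ range (min m n + 1),
        (((m - k).factorial : ℚ)⁻¹ • X ^ (m - k) *
          (((n - k).factorial : ℚ)⁻¹ • Y ^ (n - k))) * ((k.factorial : ℚ)⁻¹ • a ^ k) := by
  rw [smul_mul_smul_comm, aux_main a X Y hYX haX haY m n, Finset.smul_sum]
  have hterm : ∀ k, (((n.factorial : ℚ)⁻¹ * (m.factorial : ℚ)⁻¹) •
      ((m.choose k * (n.choose k * k.factorial)) • (X ^ (m - k) * (Y ^ (n - k) * a ^ k))))
      = (((n.factorial : ℚ)⁻¹ * (m.factorial : ℚ)⁻¹) *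
          ((m.choose k * (n.choose k * k.factorial) : ℕ) : ℚ)) •
          (X ^ (m - k) * (Y ^ (n - k) * a ^ k)) := by
    intro k
    rw [← Nat.cast_smul_eq_nsmul ℚ, smul_smul]
  simp only [hterm]
  rw [← Finset.sum_subset (Finset.range_subset_range.mpr (by omega : min m n + 1 ≤ n + 1))]
  · refine Finset.sum_congr rfl fun k hk => ?_
    have hkm : k ≤ m := by have := mem_range.mp hk; omega
    have hkn : k ≤ n := by have := mem_range.mp hk; omega
    rw [scalar_id m n k hkm hkn]
    rw [smul_mul_smul_comm, smul_mul_smul_comm,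
      mul_assoc (X ^ (m - k)) (Y ^ (n - k)) (a ^ k)]
    congr 1
    ring
  · intro k hk hk'
    have hkm : m < k := by
      have h1 := mem_range.mp hk
      have h2 : ¬ k < min m n + 1 := fun h => hk' (mem_range.mpr h)
      omega
    rw [Nat.choose_eq_zero_of_lt hkm]
    simp

/-- The formal power series `exp(T·Y) = ∑_{n ≥ 0} Y^n T^n / n!` in `C[[s,t]]`, where `T` is
the variable of index `v : Fin 2` (so `v = 0` gives `exp(sY)` and `v = 1` gives `exp(tY)`):
its coefficient on a monomial supported only on `v`, with exponent `k` at `v`, is `Y^k/k!`,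
and all other coefficients vanish. -/
def expVar {C : Type*} [Ring C] [Algebra ℚ C] (v : Fin 2) (Y : C) :
    MvPowerSeries (Fin 2) C :=
  fun e => if ∀ w, w ≠ v → e w = 0 then (((e v).factorial : ℚ)⁻¹) • Y ^ (e v) else 0

/-- The formal power series `exp(a·st) = ∑_{n ≥ 0} a^n (st)^n / n!` in `C[[s,t]]`: its
coefficient on `s^k t^k` is `a^k/k!`, and all coefficients on `s^k t^l` with `k ≠ l`
vanish. -/
def expDiag {C : Type*} [Ring C] [Algebra ℚ C] (a : C) : MvPowerSeries (Fin 2) C :=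
  fun e => if e 0 = e 1 then (((e 0).factorial : ℚ)⁻¹) • a ^ (e 0) else 0

section PS
open Finset
variable {C : Type*} [Ring C] [Algebra ℚ C]

private lemma coeff_expVar (v : Fin 2) (Y : C) (e : Fin 2 →₀ ℕ) :
    MvPowerSeries.coeff e (expVar v Y) =
      if ∀ w, w ≠ v → e w = 0 then (((e v).factorial : ℚ)⁻¹) • Y ^ (e v) else 0 := rfl

private lemma coeff_expDiag (a : C) (e : Fin 2 →₀ ℕ) :
    MvPowerSeries.coeff e (expDiag a) =
      if e 0 = e 1 then (((e 0).factorial : ℚ)⁻¹) • a ^ (e 0) else 0 := rfl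

private lemma single_cond₀ (f : Fin 2 →₀ ℕ) :
    (∀ w, w ≠ (0 : Fin 2) → f w = 0) ↔ f 1 = 0 := by
  constructor
  · intro h; exact h 1 (by decide)
  · intro h w hw
    fin_cases w
    · exact absurd rfl hw
    · exact h

private lemma single_cond₁ (f : Fin 2 →₀ ℕ) :
    (∀ w, w ≠ (1 : Fin 2) → f w = 0) ↔ f 0 = 0 := by
  constructor
  · intro h; exact h 0 (by decide)
  · intro h w hw
    fin_cases w
    · exact h
    · exact absurd rfl hw

private lemma coeff_mulXY (X Y : C) (e : Fin 2 →₀ ℕ) :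
    MvPowerSeries.coeff e (expVar 0 X * expVar 1 Y) =
      (((e 0).factorial : ℚ)⁻¹ • X ^ (e 0)) * (((e 1).factorial : ℚ)⁻¹ • Y ^ (e 1)) := by
  rw [MvPowerSeries.coeff_mul]
  have hmem : (Finsupp.single (0 : Fin 2) (e 0), Finsupp.single (1 : Fin 2) (e 1))
      ∈ antidiagonal e := by
    rw [Finset.HasAntidiagonal.mem_antidiagonal]
    ext w
    fin_cases w <;> simp
  rw [Finset.sum_eq_single_of_mem _ hmem ?_]
  · rw [coeff_expVar, coeff_expVar, if_pos, if_pos]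
    · simp
    · intro w hw; fin_cases w
      · simp
      · exact absurd rfl hw
    · intro w hw; fin_cases w
      · exact absurd rfl hw
      · simp
  · intro p hp hne
    rw [coeff_expVar, coeff_expVar]
    by_cases h1 : ∀ w, w ≠ (0 : Fin 2) → p.1 w = 0
    · by_cases h2 : ∀ w, w ≠ (1 : Fin 2) → p.2 w = 0
      · exfalso
        apply hne
        have hp1 : p.1 1 = 0 := (single_cond₀ p.1).mp h1
        have hp2 : p.2 0 = 0 := (single_cond₁ p.2).mp h2
        have hadd := Finset.HasAntidiagonal.mem_antidiagonal.mp hp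
        have h0 : p.1 0 + p.2 0 = e 0 := by rw [← Finsupp.add_apply, hadd]
        have h1' : p.1 1 + p.2 1 = e 1 := by rw [← Finsupp.add_apply, hadd]
        have e0 : p.1 0 = e 0 := by omega
        have e1 : p.2 1 = e 1 := by omega
        have q1 : p.1 = Finsupp.single (0 : Fin 2) (e 0) := by
          ext w; fin_cases w
          · simpa using e0
          · simpa using hp1
        have q2 : p.2 = Finsupp.single (1 : Fin 2) (e 1) := by
          ext w; fin_cases w
          · simpa using hp2
          · simpa using e1
        exact Prod.ext q1 q2
      · rw [if_neg h2, mul_zero]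
    · rw [if_neg h1, zero_mul]

private lemma coeff_mulYX (X Y : C) (e : Fin 2 →₀ ℕ) :
    MvPowerSeries.coeff e (expVar 1 Y * expVar 0 X) =
      (((e 1).factorial : ℚ)⁻¹ • Y ^ (e 1)) * (((e 0).factorial : ℚ)⁻¹ • X ^ (e 0)) := by
  rw [MvPowerSeries.coeff_mul]
  have hmem : (Finsupp.single (1 : Fin 2) (e 1), Finsupp.single (0 : Fin 2) (e 0))
      ∈ antidiagonal e := by
    rw [Finset.HasAntidiagonal.mem_antidiagonal]
    ext w
    fin_cases w <;> simp
  rw [Finset.sum_eq_single_of_mem _ hmem ?_]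
  · rw [coeff_expVar, coeff_expVar, if_pos, if_pos]
    · simp
    · intro w hw; fin_cases w
      · exact absurd rfl hw
      · simp
    · intro w hw; fin_cases w
      · simp
      · exact absurd rfl hw
  · intro p hp hne
    rw [coeff_expVar, coeff_expVar]
    by_cases h1 : ∀ w, w ≠ (1 : Fin 2) → p.1 w = 0
    · by_cases h2 : ∀ w, w ≠ (0 : Fin 2) → p.2 w = 0
      · exfalso
        apply hne
        have hp1 : p.1 0 = 0 := (single_cond₁ p.1).mp h1
        have hp2 : p.2 1 = 0 := (single_cond₀ p.2).mp h2
        have hadd := Finset.HasAntidiagonal.mem_antidiagonal.mp hp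
        have h0 : p.1 0 + p.2 0 = e 0 := by rw [← Finsupp.add_apply, hadd]
        have h1' : p.1 1 + p.2 1 = e 1 := by rw [← Finsupp.add_apply, hadd]
        have e0 : p.2 0 = e 0 := by omega
        have e1 : p.1 1 = e 1 := by omega
        have q1 : p.1 = Finsupp.single (1 : Fin 2) (e 1) := by
          ext w; fin_cases w
          · simpa using hp1
          · simpa using e1
        have q2 : p.2 = Finsupp.single (0 : Fin 2) (e 0) := by
          ext w; fin_cases w
          · simpa using e0
          · simpa using hp2
        exact Prod.ext q1 q2
      · rw [if_neg h2, mul_zero]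
    · rw [if_neg h1, zero_mul]

end PS

open Finset in
/-- Let `C` be a unital `ℚ`-algebra and `X, Y ∈ C` such that `a := YX − XY` commutes with
both `X` and `Y`. Then in `C[[s,t]]` (with `s` the variable of index `0` and `t` the
variable of index `1`) one has `exp(tY)·exp(sX) = exp(sX)·exp(tY)·exp(a·st)`. -/
theorem exp_commutation {C : Type*} [Ring C] [Algebra ℚ C] (X Y : C)
    (hX : Commute (Y * X - X * Y) X) (hY : Commute (Y * X - X * Y) Y) :
    expVar 1 Y * expVar 0 X = expVar 0 X * expVar 1 Y * expDiag (Y * X - X * Y) := by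
  set a : C := Y * X - X * Y with ha
  have hYX : Y * X = X * Y + a := by rw [ha]; abel
  apply MvPowerSeries.ext
  intro e
  rw [coeff_mulYX, MvPowerSeries.coeff_mul,
    aux_q a X Y hYX hX.eq hY.eq (e 0) (e 1)]
  -- rewrite each term of the antidiagonal sum
  set G : (Fin 2 →₀ ℕ) × (Fin 2 →₀ ℕ) → C := fun p =>
    ((((p.1 0).factorial : ℚ)⁻¹ • X ^ (p.1 0)) *
      (((p.1 1).factorial : ℚ)⁻¹ • Y ^ (p.1 1))) *
      (if p.2 0 = p.2 1 then (((p.2 0).factorial : ℚ)⁻¹) • a ^ (p.2 0) else 0) with hG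
  have hterm : ∀ p ∈ antidiagonal e,
      MvPowerSeries.coeff p.1 (expVar 0 X * expVar 1 Y) *
        MvPowerSeries.coeff p.2 (expDiag a) = G p := by
    intro p _
    rw [coeff_mulXY, coeff_expDiag, hG]
  rw [Finset.sum_congr rfl hterm]
  have hfilter : ∑ p ∈ (antidiagonal e).filter (fun p => p.2 0 = p.2 1), G p
      = ∑ p ∈ antidiagonal e, G p := by
    refine Finset.sum_filter_of_ne fun p _ hne => ?_
    by_contra hc
    exact hne (by rw [hG]; simp only; rw [if_neg hc, mul_zero])
  rw [← hfilter]
  -- now a bijection between range (min + 1) and the filtered antidiagonal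
  set d : ℕ → (Fin 2 →₀ ℕ) := fun k =>
    Finsupp.single (0 : Fin 2) k + Finsupp.single (1 : Fin 2) k with hd
  have hd0 : ∀ k, d k 0 = k := by intro k; simp [hd]
  have hd1 : ∀ k, d k 1 = k := by intro k; simp [hd]
  refine Finset.sum_nbij' (fun k => (e - d k, d k)) (fun p => p.2 0) ?_ ?_ ?_ ?_ ?_
  · -- hi : maps into the filtered antidiagonal
    intro k hk
    have hk' : k ≤ min (e 0) (e 1) := Nat.lt_succ_iff.mp (mem_range.mp hk)
    have hle : d k ≤ e := by
      rw [Finsupp.le_def]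
      intro i
      fin_cases i
      · show d k 0 ≤ e 0
        rw [hd0]; omega
      · show d k 1 ≤ e 1
        rw [hd1]; omega
    rw [Finset.mem_filter]
    refine ⟨?_, ?_⟩
    · rw [Finset.HasAntidiagonal.mem_antidiagonal]
      exact tsub_add_cancel_of_le hle
    · show d k 0 = d k 1
      rw [hd0, hd1]
  · -- hj : reverse map into range
    intro p hp
    rw [Finset.mem_filter] at hp
    obtain ⟨hp1, hp2⟩ := hp
    have hadd := Finset.HasAntidiagonal.mem_antidiagonal.mp hp1
    have h0 : p.1 0 + p.2 0 = e 0 := by rw [← Finsupp.add_apply, hadd]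
    have h1 : p.1 1 + p.2 1 = e 1 := by rw [← Finsupp.add_apply, hadd]
    have hp2' : p.2 0 = p.2 1 := hp2
    rw [mem_range]
    show p.2 0 < min (e 0) (e 1) + 1
    omega
  · -- left inverse
    intro k hk
    show (d k) 0 = k
    rw [hd0]
  · -- right inverse
    intro p hp
    rw [Finset.mem_filter] at hp
    obtain ⟨hp1, hp2⟩ := hp
    have hadd := Finset.HasAntidiagonal.mem_antidiagonal.mp hp1
    have hdp : d (p.2 0) = p.2 := by
      ext w
      fin_cases w
      · show d (p.2 0) 0 = p.2 0
        rw [hd0]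
      · show d (p.2 0) 1 = p.2 1
        rw [hd1]; exact hp2
    show (e - d (p.2 0), d (p.2 0)) = p
    rw [hdp]
    have hq : p.1 = e - p.2 := eq_tsub_of_add_eq hadd
    rw [← hq]
  · -- values agree
    intro k hk
    have hk' : k ≤ min (e 0) (e 1) := Nat.lt_succ_iff.mp (mem_range.mp hk)
    have hv0 : (e - d k) 0 = e 0 - k := by rw [Finsupp.tsub_apply, hd0]
    have hv1 : (e - d k) 1 = e 1 - k := by rw [Finsupp.tsub_apply, hd1]
    show _ = ((((e - d k) 0).factorial : ℚ)⁻¹ • X ^ ((e - d k) 0) *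
        (((e - d k) 1).factorial : ℚ)⁻¹ • Y ^ ((e - d k) 1)) *
        (if d k 0 = d k 1 then ((d k 0).factorial : ℚ)⁻¹ • a ^ (d k 0) else 0)
    rw [hv0, hv1, hd0, hd1, if_pos rfl]

end
end

section
/- Fix a prime p and a commutative ring R. Let F_n ∈ ℤ[X_0,…,X_n] (n ≥ 0) be the p-typical Frobenius polynomials, characterized by w_i(F_0, F_1, …) = w_{i+1}(X_0, X_1, …) for all i ≥ 0, where w_i(X) = ∑_{k=0}^{i} p^k X_k^{p^{i−k}} is the i-th p-typical Witt (ghost) polynomial. Then the R-algebra endomorphism of the polynomial ring R[X_0, X_1, X_2, …] sending X_n ↦ F_n for every n is injective; equivalently, the images of the monomials under this substitution are R-linearly independent. -/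
open MvPolynomial

section Helpers

/-- Over a ring where `p` is invertible, the ghost relation determines each polynomial. -/
private lemma witt_uniq (p : ℕ) [Invertible (p : ℚ)] (G : ℕ → MvPolynomial ℕ ℤ)
    (hG : ∀ i : ℕ, bind₁ G (wittPolynomial p ℤ i) = wittPolynomial p ℤ (i + 1)) (n : ℕ) :
    MvPolynomial.map (Int.castRingHom ℚ) (G n) =
      bind₁ (fun i => wittPolynomial p ℚ (i + 1)) (xInTermsOfW p ℚ n) := by
  have hGq : ∀ i : ℕ, bind₁ (fun k => MvPolynomial.map (Int.castRingHom ℚ) (G k))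
      (wittPolynomial p ℚ i) = wittPolynomial p ℚ (i + 1) := by
    intro i
    have := congrArg (MvPolynomial.map (Int.castRingHom ℚ)) (hG i)
    rwa [map_bind₁, map_wittPolynomial, map_wittPolynomial] at this
  calc MvPolynomial.map (Int.castRingHom ℚ) (G n)
      = bind₁ (fun k => MvPolynomial.map (Int.castRingHom ℚ) (G k)) (X n) := by
        rw [bind₁_X_right]
    _ = bind₁ (fun k => MvPolynomial.map (Int.castRingHom ℚ) (G k))
          (bind₁ (wittPolynomial p ℚ) (xInTermsOfW p ℚ n)) := by
        rw [bind₁_wittPolynomial_xInTermsOfW]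
    _ = bind₁ (fun i => bind₁ (fun k => MvPolynomial.map (Int.castRingHom ℚ) (G k))
          (wittPolynomial p ℚ i)) (xInTermsOfW p ℚ n) := by rw [bind₁_bind₁]
    _ = bind₁ (fun i => wittPolynomial p ℚ (i + 1)) (xInTermsOfW p ℚ n) := by
        simp only [hGq]

/-- Over a ring where `p` is invertible, any family satisfying the ghost relation of
Frobenius induces an injective substitution. -/
private lemma ghost_inj (p : ℕ) (S : Type*) [CommRing S] [Invertible (p : S)]
    (G : ℕ → MvPolynomial ℕ S)
    (hG : ∀ i : ℕ, bind₁ G (wittPolynomial p S i) = wittPolynomial p S (i + 1)) :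
    Function.Injective (bind₁ G : MvPolynomial ℕ S →ₐ[S] MvPolynomial ℕ S) := by
  have hsurj : Function.Surjective
      (bind₁ (wittPolynomial p S) : MvPolynomial ℕ S →ₐ[S] MvPolynomial ℕ S) := by
    intro φ
    refine ⟨bind₁ (xInTermsOfW p S) φ, ?_⟩
    rw [bind₁_bind₁]
    simp only [bind₁_wittPolynomial_xInTermsOfW]
    exact aeval_X_left_apply φ
  have hcomp : ∀ φ : MvPolynomial ℕ S, bind₁ G (bind₁ (wittPolynomial p S) φ) =
      bind₁ (fun i => wittPolynomial p S (i + 1)) φ := by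
    intro φ
    rw [bind₁_bind₁]
    simp only [hG]
  have hinj2 : Function.Injective
      (bind₁ (fun i => wittPolynomial p S (i + 1)) : MvPolynomial ℕ S →ₐ[S] MvPolynomial ℕ S) := by
    apply Function.LeftInverse.injective
      (g := fun φ => bind₁ (fun i : ℕ => X (i - 1))
        (bind₁ (xInTermsOfW p S) φ))
    intro φ
    dsimp only
    rw [bind₁_bind₁ (fun i => wittPolynomial p S (i + 1)) (xInTermsOfW p S) φ]
    simp only [bind₁_xInTermsOfW_wittPolynomial]
    rw [bind₁_bind₁]
    simp only [bind₁_X_right, Nat.add_sub_cancel]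
    exact aeval_X_left_apply φ
  intro a b hab
  obtain ⟨a', rfl⟩ := hsurj a
  obtain ⟨b', rfl⟩ := hsurj b
  simp only [hcomp] at hab
  exact congrArg _ (hinj2 hab)

end Helpers

/-- Fix a prime `p` and a commutative ring `R`. Let `F_n ∈ ℤ[X_0,…,X_n]` (`n ≥ 0`) be the
`p`-typical Frobenius polynomials, characterized by `w_i(F_0, F_1, …) = w_{i+1}(X_0, X_1, …)`
for all `i ≥ 0`, where `w_i` is the `i`-th `p`-typical Witt (ghost) polynomial
`w_i(X) = ∑_{k ≤ i} p^k X_k^{p^{i−k}}`. Then the `R`-algebra endomorphism of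
`R[X_0, X_1, …]` sending `X_n ↦ F_n` is injective. -/
theorem frobenius_substitution_injective (p : ℕ) (hp : p.Prime)
    (R : Type*) [CommRing R] (F : ℕ → MvPolynomial ℕ ℤ)
    (hF : ∀ i : ℕ, MvPolynomial.bind₁ F (wittPolynomial p ℤ i) = wittPolynomial p ℤ (i + 1)) :
    Function.Injective
      (MvPolynomial.bind₁ (fun n => (F n).map (Int.castRingHom R)) :
        MvPolynomial ℕ R →ₐ[R] MvPolynomial ℕ R) := by
  haveI : Fact p.Prime := ⟨hp⟩
  -- Step 1: identify `F` with the Frobenius polynomials of mathlib.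
  haveI : Invertible (p : ℚ) := invertibleOfNonzero (by exact_mod_cast hp.ne_zero)
  have hFfr : ∀ n, F n = WittVector.frobeniusPoly p n := by
    intro n
    apply MvPolynomial.map_injective (Int.castRingHom ℚ) Int.cast_injective
    rw [witt_uniq p F hF n, witt_uniq p (WittVector.frobeniusPoly p)
      (fun i => WittVector.bind₁_frobeniusPoly_wittPolynomial p i) n]
  set f : ℕ → MvPolynomial ℕ R := fun n => (F n).map (Int.castRingHom R) with hf
  have hfn : ∀ n, f n = X n ^ p +
      C (p : R) * (MvPolynomial.map (Int.castRingHom R) (WittVector.frobeniusPolyAux p n)) := by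
    intro n
    rw [hf]
    simp only [hFfr n, WittVector.frobeniusPoly]
    simp
  rw [injective_iff_map_eq_zero]
  intro Φ hΦ
  -- the ideal generated by the coefficients of `Φ`
  set I : Ideal R := Ideal.span (Set.range fun d : ℕ →₀ ℕ => coeff d Φ) with hI
  -- the substitution of a monomial has the expected shape mod `p`
  have hprod : ∀ d : ℕ →₀ ℕ, ∃ G : MvPolynomial ℕ R,
      (bind₁ f) ((monomial d) (1 : R)) = (monomial (p • d)) (1 : R) + C (p : R) * G := by
    intro d
    have hdvd : ∀ s : Finset ℕ, (C (p : R)) ∣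
        ((∏ i ∈ s, f i ^ d i) - ∏ i ∈ s, X i ^ (p * d i)) := by
      intro s
      induction s using Finset.induction_on with
      | empty => simp
      | @insert j s ha ih =>
        rw [Finset.prod_insert ha, Finset.prod_insert ha]
        have h1 : C (p : R) ∣ f j ^ d j - X j ^ (p * d j) := by
          have h2 : C (p : R) ∣ f j - X j ^ p :=
            ⟨MvPolynomial.map (Int.castRingHom R) (WittVector.frobeniusPolyAux p j),
              by rw [hfn j]; ring⟩
          have h3 := sub_dvd_pow_sub_pow (f j) (X j ^ p) (d j)
          rw [← pow_mul] at h3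
          exact dvd_trans h2 h3
        have key : f j ^ d j * ∏ i ∈ s, f i ^ d i - X j ^ (p * d j) * ∏ i ∈ s, X i ^ (p * d i)
            = f j ^ d j * ((∏ i ∈ s, f i ^ d i) - ∏ i ∈ s, X i ^ (p * d i))
              + (f j ^ d j - X j ^ (p * d j)) * ∏ i ∈ s, X i ^ (p * d i) := by ring
        rw [key]
        exact dvd_add (Dvd.dvd.mul_left ih _) (Dvd.dvd.mul_right h1 _)
    obtain ⟨G, hG⟩ := hdvd d.support
    refine ⟨G, ?_⟩
    have hmono : (∏ i ∈ d.support, X i ^ (p * d i) : MvPolynomial ℕ R)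
        = (monomial (p • d)) (1 : R) := by
      rw [← prod_X_pow_eq_monomial]
      rw [Finsupp.support_smul_eq hp.ne_zero]
      exact Finset.prod_congr rfl fun i _ => by rw [Finsupp.smul_apply, smul_eq_mul]
    rw [bind₁_monomial, C_1, one_mul, ← hmono]
    linear_combination hG
  choose g hg using hprod
  -- Step 2 (mod p): each coefficient of Φ lies in p • I
  have key0 : ∀ a : ℕ →₀ ℕ, ∃ y ∈ I, coeff a Φ = (p : R) * y := by
    intro a
    by_cases ha : a ∈ Φ.support
    · have hsm : ∀ d : ℕ →₀ ℕ, (p • d = p • a) ↔ d = a := by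
        intro d
        constructor
        · intro h
          ext i
          have h2 : (p • d) i = (p • a) i := by rw [h]
          simp only [Finsupp.smul_apply, smul_eq_mul] at h2
          exact Nat.eq_of_mul_eq_mul_left hp.pos h2
        · rintro rfl; rfl
      have h0 : (0 : R) = coeff (p • a) ((bind₁ f) Φ) := by rw [hΦ]; simp
      have hexp : (bind₁ f) Φ = ∑ d ∈ Φ.support,
          (C (coeff d Φ) * ((monomial (p • d)) (1 : R) + C (p : R) * g d)) := by
        conv_lhs => rw [← support_sum_monomial_coeff Φ]
        rw [map_sum]
        refine Finset.sum_congr rfl fun d _ => ?_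
        have : (monomial d) (coeff d Φ) = C (coeff d Φ) * (monomial d) (1 : R) := by
          rw [C_mul_monomial, mul_one]
        rw [this, map_mul, algHom_C, hg d, MvPolynomial.algebraMap_eq]
      rw [hexp, coeff_sum] at h0
      have h1 : ∀ d ∈ Φ.support,
          coeff (p • a) (C (coeff d Φ) * ((monomial (p • d)) (1 : R) + C (p : R) * g d))
          = (if d = a then coeff d Φ else 0)
            + (p : R) * (coeff d Φ * coeff (p • a) (g d)) := by
        intro d _
        rw [coeff_C_mul, coeff_add, coeff_monomial, coeff_C_mul]
        rw [mul_add]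
        congr 1
        · simp only [hsm d]
          split <;> simp
        · ring
      rw [Finset.sum_congr rfl h1, Finset.sum_add_distrib, Finset.sum_ite_eq' Φ.support a,
        if_pos ha, ← Finset.mul_sum] at h0
      refine ⟨-∑ d ∈ Φ.support, coeff d Φ * coeff (p • a) (g d), ?_, by linear_combination -h0⟩
      · refine neg_mem (Ideal.sum_mem I fun d _ => ?_)
        exact Ideal.mul_mem_right _ I (Ideal.subset_span ⟨d, rfl⟩)
    · refine ⟨0, zero_mem I, ?_⟩
      rw [MvPolynomial.notMem_support_iff.mp ha, mul_zero]
  -- Step 3 (invert p): coefficients are p-power torsion, via localization away from p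
  have tor : ∀ a : ℕ →₀ ℕ, ∃ k : ℕ, (p : R) ^ k * coeff a Φ = 0 := by
    set S := Localization.Away (p : R)
    have hpu : IsUnit (algebraMap R S (p : R)) :=
      IsLocalization.map_units S (⟨(p : R), Submonoid.mem_powers _⟩ : Submonoid.powers (p : R))
    haveI : Invertible (p : S) := by
      have : ((p : ℕ) : S) = algebraMap R S (p : R) := by simp
      rw [this]
      exact hpu.invertible
    have hGS : ∀ i : ℕ, bind₁ (fun n => MvPolynomial.map (Int.castRingHom S) (F n))
        (wittPolynomial p S i) = wittPolynomial p S (i + 1) := by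
      intro i
      have := congrArg (MvPolynomial.map (Int.castRingHom S)) (hF i)
      rwa [map_bind₁, map_wittPolynomial, map_wittPolynomial] at this
    have hinj := ghost_inj p S (fun n => MvPolynomial.map (Int.castRingHom S) (F n)) hGS
    have hmapz : MvPolynomial.map (algebraMap R S) Φ = 0 := by
      apply hinj
      have hfs : (fun i => MvPolynomial.map (algebraMap R S) (f i))
          = fun n => MvPolynomial.map (Int.castRingHom S) (F n) := by
        funext n
        rw [hf]
        dsimp only
        rw [MvPolynomial.map_map]
        exact congrArg (fun h : ℤ →+* S => MvPolynomial.map h (F n)) (Subsingleton.elim _ _)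
      have hc : MvPolynomial.map (algebraMap R S) ((bind₁ f) Φ)
          = (bind₁ (fun n => MvPolynomial.map (Int.castRingHom S) (F n)))
              (MvPolynomial.map (algebraMap R S) Φ) := by
        rw [map_bind₁, hfs]
      rw [hΦ] at hc
      simp only [map_zero] at hc
      rw [← hc]
      simp
    intro a
    have hca : algebraMap R S (coeff a Φ) = 0 := by
      have := congrArg (coeff a) hmapz
      rwa [coeff_map, coeff_zero] at this
    obtain ⟨⟨m, k, hk⟩, hm⟩ :=
      (IsLocalization.map_eq_zero_iff (Submonoid.powers (p : R)) S (coeff a Φ)).mp hca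
    exact ⟨k, by simpa [← hk] using hm⟩
  -- Step 4: combine.
  have step : ∀ x ∈ I, ∃ y ∈ I, x = (p : R) * y := by
    intro x hx
    induction hx using Submodule.span_induction with
    | mem x h =>
      obtain ⟨d, rfl⟩ := h
      exact key0 d
    | zero => exact ⟨0, zero_mem I, by ring⟩
    | add x y hx hy ihx ihy =>
      obtain ⟨u, hu, hxu⟩ := ihx
      obtain ⟨v, hv, hyv⟩ := ihy
      exact ⟨u + v, add_mem hu hv, by rw [hxu, hyv]; ring⟩
    | smul r x hx ihx =>
      obtain ⟨u, hu, hxu⟩ := ihx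
      exact ⟨r • u, Submodule.smul_mem I r hu, by rw [smul_eq_mul, smul_eq_mul, hxu]; ring⟩
  have stepk : ∀ k : ℕ, ∀ x ∈ I, ∃ y ∈ I, x = (p : R) ^ k * y := by
    intro k
    induction k with
    | zero => exact fun x hx => ⟨x, hx, by ring⟩
    | succ k ih =>
      intro x hx
      obtain ⟨y, hy, hxy⟩ := ih x hx
      obtain ⟨z, hz, hyz⟩ := step y hy
      exact ⟨z, hz, by rw [hxy, hyz]; ring⟩
  -- a uniform power of p kills I
  have kk : ∀ d : ℕ →₀ ℕ, ∃ k : ℕ, (p : R) ^ k * coeff d Φ = 0 := tor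
  classical
  set N : ℕ := Φ.support.sup fun d => (kk d).choose with hN
  have killgen : ∀ x ∈ I, (p : R) ^ N * x = 0 := by
    intro x hx
    induction hx using Submodule.span_induction with
    | mem x h =>
      obtain ⟨d, rfl⟩ := h
      show (p : R) ^ N * coeff d Φ = 0
      by_cases hd : d ∈ Φ.support
      · have hle : (kk d).choose ≤ N := Finset.le_sup (f := fun d => (kk d).choose) hd
        calc (p : R) ^ N * coeff d Φ
            = (p : R) ^ (N - (kk d).choose) * ((p : R) ^ (kk d).choose * coeff d Φ) := by
              rw [← mul_assoc, ← pow_add, Nat.sub_add_cancel hle]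
          _ = 0 := by rw [(kk d).choose_spec, mul_zero]
      · rw [MvPolynomial.notMem_support_iff.mp hd, mul_zero]
    | zero => rw [mul_zero]
    | add x y hx hy ihx ihy => rw [mul_add, ihx, ihy, add_zero]
    | smul r x hx ihx => rw [smul_eq_mul, mul_left_comm, ihx, mul_zero]
  -- conclude coefficients vanish
  ext d
  rw [coeff_zero]
  have hd : coeff d Φ ∈ I := Ideal.subset_span ⟨d, rfl⟩
  obtain ⟨y, hy, hdy⟩ := stepk N (coeff d Φ) hd
  rw [hdy, killgen y hy]
end
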